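/- Let K be a prime field with q elements, P a polynomial generic representation over K, and F_{n+1,j}: P(K^n) → P(K^{n+1}) the operator sending p to the coefficient of s¹ in P(g_{n+1,j}(s) ∘ ι)p, where ι: K^n → K^{n+1} is the standard inclusion and g_{n+1,j}(s) = I + sE_{n+1,j}. Then F_{n+1,j} is injective on the direct sum of the weight spaces P(K^n)_χ with χ = (a₁,...,a_n) satisfying a_j > 0, and is zero on the weight spaces with a_j = 0. -/

import Mathlib

/-- A generic representation over `K`, presented on the skeleton `n ↦ K^n` of the category
of finite-dimensional `K`-vector spaces: a functor `Vec → Vec`. -/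
structure GenRep (K : Type) [Field K] where
  obj : ℕ → Type
  [addcg : ∀ n, AddCommGroup (obj n)]
  [mod : ∀ n, Module K (obj n)]
  map : ∀ {m n : ℕ}, ((Fin m → K) →ₗ[K] (Fin n → K)) → (obj m →ₗ[K] obj n)
  map_id : ∀ n : ℕ, map (LinearMap.id : (Fin n → K) →ₗ[K] (Fin n → K)) = LinearMap.id
  map_comp : ∀ {m n p : ℕ} (φ : (Fin m → K) →ₗ[K] (Fin n → K))
    (ψ : (Fin n → K) →ₗ[K] (Fin p → K)), map (ψ ∘ₗ φ) = map ψ ∘ₗ map φ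

attribute [instance] GenRep.addcg GenRep.mod

variable {K : Type} [Field K]

/-- `f : (α → K) → W` is (given by) a polynomial of (total) degree at most `e` in the
coordinates, with coefficients in the `K`-module `W`.  For `e = -1` this forces `f = 0`. -/
def PolyDeg (K : Type) [Field K] {α : Type} [Fintype α] {W : Type} [AddCommGroup W]
    [Module K W] (e : ℤ) (f : (α → K) → W) : Prop :=
  ∃ (s : Finset (α →₀ ℕ)) (c : (α →₀ ℕ) → W),
    (∀ m ∈ s, ((m.sum fun _ k => k : ℕ) : ℤ) ≤ e) ∧
    ∀ x : α → K, f x = ∑ m ∈ s, (∏ a ∈ m.support, x a ^ m a) • c m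

/-- A generic representation has degree at most `e` if all its maps
`Hom(K^m, K^n) → Hom(P(K^m), P(K^n))` are polynomial of degree `≤ e` in the matrix entries. -/
def GenRep.HasDegLE (P : GenRep K) (e : ℤ) : Prop :=
  ∀ m n : ℕ, PolyDeg K e (fun x : Fin n × Fin m → K =>
    P.map ((Matrix.of fun i j => x (i, j)).mulVecLin))

/-- A generic representation is polynomial if it has some finite degree. -/
def GenRep.IsPoly (P : GenRep K) : Prop := ∃ e : ℤ, P.HasDegLE e

/-- `P` has degree exactly `d`. -/
def GenRep.IsDegree (P : GenRep K) (d : ℤ) : Prop :=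
  P.HasDegLE d ∧ ∀ e : ℤ, P.HasDegLE e → d ≤ e

/-- A subrepresentation of a generic representation. -/
structure SubRep (P : GenRep K) where
  carrier : ∀ n : ℕ, Submodule K (P.obj n)
  stable : ∀ {m n : ℕ} (φ : (Fin m → K) →ₗ[K] (Fin n → K)),
    ∀ x ∈ carrier m, P.map φ x ∈ carrier n

/-- The quotient representation `P/N` has degree at most `e`; expressed via the composites
`mkQ ∘ P(φ)`, which present the maps of `P/N`. -/
def QuotDegLE (P : GenRep K) (N : SubRep P) (e : ℤ) : Prop :=
  ∀ m n : ℕ, PolyDeg K e (fun x : Fin n × Fin m → K =>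
    (N.carrier n).mkQ ∘ₗ P.map ((Matrix.of fun i j => x (i, j)).mulVecLin))

/-- `N` is the top part `P_{>e}`: the inclusion-wise minimal subrepresentation of `P` whose
quotient has degree at most `e`. -/
def IsTopPart (P : GenRep K) (e : ℤ) (N : SubRep P) : Prop :=
  QuotDegLE P N e ∧ ∀ N' : SubRep P, QuotDegLE P N' e → ∀ n, N.carrier n ≤ N'.carrier n

/-- A morphism (natural transformation) of generic representations. -/
structure RepHom (P Q : GenRep K) where
  app : ∀ n : ℕ, P.obj n →ₗ[K] Q.obj n
  natural : ∀ {m n : ℕ} (φ : (Fin m → K) →ₗ[K] (Fin n → K)),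
    app n ∘ₗ P.map φ = Q.map φ ∘ₗ app m

/-- The standard inclusion `K^n → K^{n+1}` (appending a zero coordinate). -/
def stdIncl (K : Type) [Field K] (n : ℕ) : (Fin n → K) →ₗ[K] (Fin (n + 1) → K) where
  toFun x := Fin.snoc x 0
  map_add' a b := by
    funext i
    cases i using Fin.lastCases <;> simp
  map_smul' c a := by
    funext i
    cases i using Fin.lastCases <;> simp

/-- The weight space for the weight given by an exponent tuple `a`, i.e. for the character
`diag(t) ↦ ∏ tᵢ^{aᵢ}`. -/
def wtSpE (P : GenRep K) (n : ℕ) (a : Fin n → ℕ) : Submodule K (P.obj n) where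
  carrier := {p | ∀ t : Fin n → K,
    P.map (Matrix.diagonal t).mulVecLin p = (∏ i, t i ^ a i) • p}
  add_mem' := by
    intro x y hx hy t
    simp [map_add, hx t, hy t, smul_add]
  zero_mem' := by
    intro t
    simp
  smul_mem' := by
    intro c x hx t
    rw [map_smul, hx t, smul_comm]

section Aux18

variable {K : Type} [Field K]

lemma aux18_gs_mulVec (n : ℕ) (j : Fin n) (s : K) (y : Fin (n+1) → K) :
    (1 + s • Matrix.single (Fin.last n) j.castSucc (1 : K)).mulVec y
      = y + s • (fun k => if k = Fin.last n then y j.castSucc else 0) := by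
  rw [Matrix.add_mulVec, Matrix.one_mulVec, Matrix.smul_mulVec]
  congr 1
  funext k
  simp [Matrix.mulVec, Matrix.single, dotProduct, ite_and,
    Finset.sum_ite_eq, eq_comm]

lemma aux18_gs_apply (n : ℕ) (j : Fin n) (s : K) (x : Fin n → K) :
    (1 + s • Matrix.single (Fin.last n) j.castSucc (1 : K)).mulVecLin
      (stdIncl K n x) = Fin.snoc x (s * x j) := by
  show (1 + s • Matrix.single (Fin.last n) j.castSucc (1 : K)).mulVec
      (Fin.snoc x 0) = Fin.snoc x (s * x j)
  rw [aux18_gs_mulVec]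
  funext k
  cases k using Fin.lastCases with
  | last => simp
  | cast i => simp [(Fin.castSucc_lt_last i).ne]

/-- The map `K^{n+1} → K^n` adding the last coordinate to the `j`-th. -/
def aux18_phiMap (K : Type) [Field K] (n : ℕ) (j : Fin n) :
    (Fin (n + 1) → K) →ₗ[K] (Fin n → K) where
  toFun y i := y i.castSucc + if i = j then y (Fin.last n) else 0
  map_add' a b := by
    funext i
    by_cases h : i = j <;> simp [h] <;> ring_nf
  map_smul' c a := by
    funext i
    by_cases h : i = j <;> simp [h, mul_add]

lemma aux18_phi_comp (n : ℕ) (j : Fin n) (s : K) :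
    aux18_phiMap K n j ∘ₗ
        ((1 + s • Matrix.single (Fin.last n) j.castSucc (1 : K)).mulVecLin
          ∘ₗ stdIncl K n)
      = (Matrix.diagonal (fun i => if i = j then 1 + s else 1)).mulVecLin := by
  apply LinearMap.ext; intro x
  rw [LinearMap.comp_apply, LinearMap.comp_apply, aux18_gs_apply]
  funext i
  simp only [aux18_phiMap, LinearMap.coe_mk, AddHom.coe_mk, Matrix.mulVecLin_apply,
    Matrix.mulVec_diagonal]
  by_cases h : i = j <;> simp [h] <;> ring_nf

lemma aux18_g_d0 (n : ℕ) (j : Fin n) (s : K) :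
    ((1 + s • Matrix.single (Fin.last n) j.castSucc (1 : K)).mulVecLin
        ∘ₗ stdIncl K n) ∘ₗ (Matrix.diagonal (fun i => if i = j then (0:K) else 1)).mulVecLin
      = ((1 + (0:K) • Matrix.single (Fin.last n) j.castSucc (1 : K)).mulVecLin
        ∘ₗ stdIncl K n) ∘ₗ (Matrix.diagonal (fun i => if i = j then (0:K) else 1)).mulVecLin := by
  apply LinearMap.ext; intro x
  simp only [LinearMap.comp_apply, aux18_gs_apply]
  have : (Matrix.diagonal (fun i => if i = j then (0:K) else 1)).mulVecLin x j = 0 := by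
    simp [Matrix.mulVec_diagonal]
  rw [this]
  simp

lemma aux18_vand_row [Fintype K] (hq : 1 < Fintype.card K) :
    ∃ w v : Fin (Fintype.card K) → K,
      ∀ b : Fin (Fintype.card K), ∑ i, w i * v i ^ (b : ℕ)
        = if b = (⟨1, hq⟩ : Fin (Fintype.card K)) then 1 else 0 := by
  let e : Fin (Fintype.card K) ≃ K := (Fintype.equivFin K).symm
  let M : Matrix (Fin (Fintype.card K)) (Fin (Fintype.card K)) K :=
    Matrix.vandermonde (fun i => e i)
  have hdet : IsUnit M.det := by
    rw [Matrix.det_vandermonde]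
    apply IsUnit.mk0
    apply Finset.prod_ne_zero_iff.mpr
    intro i _
    apply Finset.prod_ne_zero_iff.mpr
    intro k hk
    rw [Finset.mem_Ioi] at hk
    exact sub_ne_zero_of_ne (fun h => hk.ne' (e.injective h))
  refine ⟨fun i => M⁻¹ ⟨1, hq⟩ i, fun i => e i, fun b => ?_⟩
  have h := Matrix.nonsing_inv_mul M hdet
  have := congrFun (congrFun h ⟨1, hq⟩) b
  rw [Matrix.mul_apply] at this
  simpa [M, Matrix.vandermonde, Matrix.one_apply, eq_comm] using this

lemma aux18_extract {W : Type} [AddCommGroup W] [Module K W] {m : ℕ} (w v : Fin m → K)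
    (b₀ : Fin m) (hw : ∀ b : Fin m, ∑ i, w i * v i ^ (b : ℕ) = if b = b₀ then 1 else 0)
    (c : Fin m → W) (f : K → W) (hf : ∀ s : K, f s = ∑ b : Fin m, s ^ (b : ℕ) • c b) :
    ∑ i, w i • f (v i) = c b₀ := by
  calc ∑ i, w i • f (v i) = ∑ i, ∑ b : Fin m, (w i * v i ^ (b:ℕ)) • c b := by
        refine Finset.sum_congr rfl fun i _ => ?_
        rw [hf (v i), Finset.smul_sum]
        exact Finset.sum_congr rfl fun b _ => by rw [smul_smul]
    _ = ∑ b : Fin m, (∑ i, w i * v i ^ (b:ℕ)) • c b := by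
        rw [Finset.sum_comm]
        exact Finset.sum_congr rfl fun b _ => by rw [Finset.sum_smul]
    _ = c b₀ := by
        simp only [hw, ite_smul, one_smul, zero_smul]
        simp

lemma aux18_sum_binom {m : ℕ} (w v : Fin m → K) (b₀ : Fin m) (hb₀ : (b₀ : ℕ) = 1)
    (hw : ∀ b : Fin m, ∑ i, w i * v i ^ (b : ℕ) = if b = b₀ then 1 else 0)
    (d : ℕ) (hd : d < m) : ∑ i, w i * (1 + v i) ^ d = (d : K) := by
  have key : ∀ k, k < m → ∑ i, w i * v i ^ k = if k = 1 then 1 else 0 := by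
    intro k hk
    have := hw ⟨k, hk⟩
    simp only [Fin.ext_iff, hb₀] at this ⊢
    exact this
  calc ∑ i, w i * (1 + v i) ^ d
      = ∑ i, ∑ k ∈ Finset.range (d+1), w i * (v i ^ k * (d.choose k : K)) := by
        refine Finset.sum_congr rfl fun i _ => ?_
        rw [add_comm (1 : K) (v i), add_pow]
        rw [Finset.mul_sum]
        exact Finset.sum_congr rfl fun k _ => by ring
    _ = ∑ k ∈ Finset.range (d+1), (d.choose k : K) * ∑ i, w i * v i ^ k := by
        rw [Finset.sum_comm]
        refine Finset.sum_congr rfl fun k _ => ?_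
        rw [Finset.mul_sum]
        exact Finset.sum_congr rfl fun i _ => by ring
    _ = (d : K) := by
        rw [Finset.sum_congr rfl (fun k hk => by
          rw [key k (lt_of_le_of_lt (Nat.lt_succ_iff.mp (Finset.mem_range.mp hk)) hd)])]
        simp only [mul_ite, mul_one, mul_zero]
        rw [Finset.sum_ite_eq' (Finset.range (d+1)) 1 (fun k => (d.choose k : K))]
        by_cases h : d = 0
        · simp [h]
        · rw [if_pos (Finset.mem_range.mpr (by omega))]
          simp [Nat.choose_one_right]

lemma aux18_charP [Fintype K] (hq : (Fintype.card K).Prime) : CharP K (Fintype.card K) := by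
  have h1 : CharP K (ringChar K) := ringChar.charP K
  obtain ⟨nn, hpp, hcard⟩ := FiniteField.card K (ringChar K)
  have hdvd : ringChar K ∣ Fintype.card K := hcard ▸ dvd_pow_self _ nn.pos.ne'
  rcases hq.eq_one_or_self_of_dvd _ hdvd with h | h
  · exact absurd h hpp.one_lt.ne'
  · exact h ▸ h1

end Aux18

theorem stmt18 (K : Type) [Field K] [Fintype K] (hq : (Fintype.card K).Prime)
    (P : GenRep K) (hP : P.IsPoly) (n : ℕ) (j : Fin n) :
    (∀ a : Fin n → ℕ, (∀ i, a i ≤ Fintype.card K - 1) → a j = 0 →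
      ∀ p ∈ wtSpE P n a, ∀ c : Fin (Fintype.card K) → P.obj (n + 1),
        (∀ s : K,
          P.map ((1 + s • Matrix.single (Fin.last n) j.castSucc (1 : K)).mulVecLin
              ∘ₗ stdIncl K n) p =
            ∑ b : Fin (Fintype.card K), s ^ (b : ℕ) • c b) →
        c ⟨1, hq.one_lt⟩ = 0) ∧
    (∀ p ∈ ⨆ a ∈ {a : Fin n → ℕ | (∀ i, a i ≤ Fintype.card K - 1) ∧ 0 < a j},
        wtSpE P n a,
      ∀ c : Fin (Fintype.card K) → P.obj (n + 1),
        (∀ s : K,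
          P.map ((1 + s • Matrix.single (Fin.last n) j.castSucc (1 : K)).mulVecLin
              ∘ₗ stdIncl K n) p =
            ∑ b : Fin (Fintype.card K), s ^ (b : ℕ) • c b) →
        c ⟨1, hq.one_lt⟩ = 0 → p = 0) := by
  obtain ⟨w, v, hw⟩ := aux18_vand_row (K := K) hq.one_lt
  set g : K → ((Fin n → K) →ₗ[K] (Fin (n+1) → K)) := fun s =>
    (1 + s • Matrix.single (Fin.last n) j.castSucc (1 : K)).mulVecLin
      ∘ₗ stdIncl K n with hg
  constructor
  · -- vanishing on weight spaces with a j = 0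
    intro a ha haj p hp c hc
    have hp' : ∀ t : Fin n → K,
        P.map (Matrix.diagonal t).mulVecLin p = (∏ i, t i ^ a i) • p := hp
    set t₀ : Fin n → K := fun i => if i = j then 0 else 1 with ht₀
    have hd0 : P.map (Matrix.diagonal t₀).mulVecLin p = p := by
      rw [hp' t₀]
      have hone : ∏ i, t₀ i ^ a i = 1 := Finset.prod_eq_one (fun i _ => by
        by_cases h : i = j
        · subst h; simp [ht₀, haj]
        · simp [ht₀, h])
      rw [hone, one_smul]
    have hconst : ∀ s : K, P.map (g s) p = P.map (g 0) p := by
      intro s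
      conv_lhs => rw [← hd0]
      conv_rhs => rw [← hd0]
      rw [← LinearMap.comp_apply, ← LinearMap.comp_apply, ← P.map_comp, ← P.map_comp]
      exact congrFun (congrArg (fun φ => ⇑(P.map φ)) (aux18_g_d0 n j s)) p
    have h1 : ∑ i, w i • (fun s => P.map (g s) p) (v i) = c ⟨1, hq.one_lt⟩ :=
      aux18_extract w v _ hw c _ (fun s => hc s)
    have hs0 : ∑ i, w i = 0 := by
      have h0 := hw ⟨0, hq.pos⟩
      simp only [Fin.ext_iff] at h0
      simpa using h0
    rw [← h1]
    calc ∑ i, w i • (fun s => P.map (g s) p) (v i)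
        = ∑ i, w i • P.map (g 0) p := Finset.sum_congr rfl fun i _ => by
            simp only [hconst]
      _ = (∑ i, w i) • P.map (g 0) p := by rw [Finset.sum_smul]
      _ = 0 := by rw [hs0, zero_smul]
  · -- injectivity
    haveI : CharP K (Fintype.card K) := aux18_charP hq
    set G : P.obj n →ₗ[K] P.obj (n+1) := ∑ i, w i • P.map (g (v i)) with hGdef
    set T : P.obj n →ₗ[K] P.obj n := P.map (aux18_phiMap K n j) ∘ₗ G with hTdef
    have hGapp : ∀ p : P.obj n, G p = ∑ i, w i • P.map (g (v i)) p := by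
      intro p
      rw [hGdef]
      simp [LinearMap.sum_apply]
    have hT : ∀ a : Fin n → ℕ, a j ≤ Fintype.card K - 1 →
        ∀ p ∈ wtSpE P n a, T p = ((a j : ℕ) : K) • p := by
      intro a haj p hp
      have hp' : ∀ t : Fin n → K,
          P.map (Matrix.diagonal t).mulVecLin p = (∏ i, t i ^ a i) • p := hp
      rw [hTdef, LinearMap.comp_apply, hGapp, map_sum]
      have step : ∀ i : Fin (Fintype.card K),
          P.map (aux18_phiMap K n j) (w i • P.map (g (v i)) p)
            = (w i * (1 + v i) ^ a j) • p := by
        intro i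
        rw [map_smul, ← LinearMap.comp_apply, ← P.map_comp, hg, aux18_phi_comp, hp']
        have hprod : (∏ i', (if i' = j then 1 + v i else 1) ^ a i') = (1 + v i) ^ a j := by
          rw [Finset.prod_eq_single j (fun i' _ h => by simp [h]) (by simp)]
          simp
        rw [hprod, smul_smul]
      rw [Finset.sum_congr rfl (fun i _ => step i), ← Finset.sum_smul,
        aux18_sum_binom w v ⟨1, hq.one_lt⟩ rfl hw (a j)
          (by have := hq.two_le; omega)]
    have hker : (⨆ a ∈ {a : Fin n → ℕ | (∀ i, a i ≤ Fintype.card K - 1) ∧ 0 < a j},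
        wtSpE P n a) ≤ LinearMap.ker (T ^ (Fintype.card K - 1) - 1) := by
      refine iSup₂_le fun a ha => fun p hp => ?_
      obtain ⟨ha1, ha2⟩ := ha
      have hTpow : ∀ k : ℕ, (T ^ k) p = ((a j : ℕ) : K) ^ k • p := by
        intro k
        induction k with
        | zero => simp
        | succ k ih =>
          rw [pow_succ', Module.End.mul_apply, ih, map_smul, hT a (ha1 j) p hp,
            smul_smul, ← pow_succ]
      rw [LinearMap.mem_ker, LinearMap.sub_apply, Module.End.one_apply, hTpow]
      have hne : ((a j : ℕ) : K) ≠ 0 := by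
        intro h
        rw [CharP.cast_eq_zero_iff K (Fintype.card K)] at h
        have := Nat.le_of_dvd ha2 h
        have := ha1 j
        have := hq.two_le
        omega
      rw [FiniteField.pow_card_sub_one_eq_one _ hne, one_smul, sub_self]
    intro p hp c hc hc1
    have hG : G p = c ⟨1, hq.one_lt⟩ := by
      rw [hGapp]
      exact aux18_extract w v _ hw c _ (fun s => hc s)
    have hT0 : T p = 0 := by
      rw [hTdef, LinearMap.comp_apply, hG, hc1, map_zero]
    have h1 : (T ^ (Fintype.card K - 1)) p = p := by
      have hm := hker hp
      rw [LinearMap.mem_ker, LinearMap.sub_apply, Module.End.one_apply, sub_eq_zero] at hm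
      exact hm
    have hq2 : Fintype.card K - 1 = (Fintype.card K - 2) + 1 := by
      have := hq.two_le; omega
    rw [hq2, pow_succ, Module.End.mul_apply, hT0, map_zero] at h1
    exact h1.symm
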